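/- Let a > 0 and let b satisfy 0 < b < π/2. Then for every real λ one has |K̂_a(λ)| ≤ κ·e^{−b|λ|}, where κ = κ(a,b) = 2·∫_0^∞ exp(−a·cos(b)·cosh u) du. -/

import Mathlib

open Real MeasureTheory Filter Topology Set

/-! ### Auxiliary real-analysis lemmas -/

lemma aux_two_cosh_ge (x : ℝ) : |x| + 1 ≤ 2 * Real.cosh x := by
  rcases le_total 0 x with h | h
  · rw [abs_of_nonneg h, Real.cosh_eq]
    have h1 := Real.add_one_le_exp x
    have h2 : (0:ℝ) < Real.exp (-x) := Real.exp_pos _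
    nlinarith
  · rw [abs_of_nonpos h, Real.cosh_eq]
    have h1 := Real.add_one_le_exp (-x)
    have h2 : (0:ℝ) < Real.exp x := Real.exp_pos _
    nlinarith

lemma aux_integrable_exp_neg_mul_abs {d : ℝ} (hd : 0 < d) :
    Integrable (fun x : ℝ => Real.exp (-d * |x|)) := by
  have hIoi : IntegrableOn (fun x : ℝ => Real.exp (-d * |x|)) (Ioi 0) := by
    refine ((exp_neg_integrableOn_Ioi 0 hd)).congr_fun ?_ measurableSet_Ioi
    intro x hx; simp only []; rw [abs_of_pos hx]
  have hIic : IntegrableOn (fun x : ℝ => Real.exp (-d * |x|)) (Iic 0) := by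
    rw [← Measure.map_neg_eq_self (volume : Measure ℝ)]
    have m : MeasurableEmbedding fun x : ℝ => -x := (Homeomorph.neg ℝ).measurableEmbedding
    rw [m.integrableOn_map_iff]
    simp_rw [Function.comp_def, abs_neg, neg_preimage, neg_Iic, neg_zero]
    exact Iff.mpr integrableOn_Ici_iff_integrableOn_Ioi hIoi
  have := hIic.union hIoi
  rwa [Iic_union_Ioi, integrableOn_univ] at this

lemma aux_integrable_poly_exp_neg_cosh {c C1 C2 : ℝ} (hc : 0 < c) (h1 : 0 ≤ C1) (h2 : 0 ≤ C2) :
    Integrable (fun x : ℝ => (C1 * Real.cosh x + C2) * Real.exp (-(c * Real.cosh x))) := by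
  have key : ∀ x : ℝ, (C1 * Real.cosh x + C2) * Real.exp (-(c * Real.cosh x))
      ≤ ((2 * C1 / c + C2) * Real.exp (-(c/4))) * Real.exp (-(c/4) * |x|) := by
    intro x
    have hcosh : 0 ≤ Real.cosh x := (Real.cosh_pos x).le
    have hcc : |x| + 1 ≤ 2 * Real.cosh x := aux_two_cosh_ge x
    have hyb : C1 * Real.cosh x + C2 ≤ (2 * C1 / c + C2) * Real.exp (c/2 * Real.cosh x) := by
      have h3 : (c/2) * Real.cosh x ≤ Real.exp ((c/2) * Real.cosh x) :=
        (Real.add_one_le_exp _).trans' (by linarith)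
      have h4 : (1:ℝ) ≤ Real.exp ((c/2) * Real.cosh x) :=
        Real.one_le_exp (by positivity)
      have h5 : C1 * Real.cosh x ≤ (2 * C1 / c) * Real.exp ((c/2) * Real.cosh x) := by
        rcases eq_or_lt_of_le h1 with rfl | h1'
        · simp
        · rw [div_mul_eq_mul_div, le_div_iff₀ hc]
          calc C1 * Real.cosh x * c = (2*C1) * ((c/2) * Real.cosh x) := by ring
            _ ≤ (2*C1) * Real.exp ((c/2) * Real.cosh x) := by
                have := h3; nlinarith
            _ = 2 * C1 * Real.exp ((c/2) * Real.cosh x) * 1 := by ring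
            _ ≤ _ := by nlinarith [Real.exp_pos ((c/2) * Real.cosh x)]
      nlinarith
    calc (C1 * Real.cosh x + C2) * Real.exp (-(c * Real.cosh x))
        ≤ ((2 * C1 / c + C2) * Real.exp (c/2 * Real.cosh x)) * Real.exp (-(c * Real.cosh x)) := by
          apply mul_le_mul_of_nonneg_right hyb (Real.exp_pos _).le
      _ = (2 * C1 / c + C2) * Real.exp (-(c/2) * Real.cosh x) := by
          rw [mul_assoc, ← Real.exp_add]; ring_nf
      _ ≤ (2 * C1 / c + C2) * Real.exp (-(c/4) * (|x| + 1)) := by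
          apply mul_le_mul_of_nonneg_left _ (by positivity)
          apply Real.exp_le_exp.2
          nlinarith
      _ = ((2 * C1 / c + C2) * Real.exp (-(c/4))) * Real.exp (-(c/4) * |x|) := by
          rw [mul_assoc, ← Real.exp_add]; ring_nf
  refine (((aux_integrable_exp_neg_mul_abs (d := c/4) (by positivity)).const_mul
      ((2 * C1 / c + C2) * Real.exp (-(c/4)))).mono' ?_ ?_)
  · apply Continuous.aestronglyMeasurable; fun_prop
  · filter_upwards with x
    rw [Real.norm_eq_abs, abs_of_nonneg (by positivity)]
    exact key x

lemma aux_integrable_exp_neg_cosh {c : ℝ} (hc : 0 < c) :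
    Integrable (fun x : ℝ => Real.exp (-(c * Real.cosh x))) := by
  have := aux_integrable_poly_exp_neg_cosh (c := c) (C1 := 0) (C2 := 1) hc le_rfl zero_le_one
  simpa using this

lemma aux_cosh_lower (x : ℝ) : 1/2 * |x| + (-1/2 : ℝ) ≤ Real.cosh x := by
  have := aux_two_cosh_ge x; linarith

lemma aux_tendsto_cosh_atTop : Tendsto Real.cosh atTop atTop := by
  refine tendsto_atTop_mono aux_cosh_lower ?_
  exact tendsto_atTop_add_const_right _ _
    (tendsto_abs_atTop_atTop.const_mul_atTop (by norm_num : (0:ℝ) < 1/2))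

lemma aux_tendsto_cosh_atBot : Tendsto Real.cosh atBot atTop := by
  refine tendsto_atTop_mono aux_cosh_lower ?_
  exact tendsto_atTop_add_const_right _ _
    (tendsto_abs_atBot_atTop.const_mul_atTop (by norm_num : (0:ℝ) < 1/2))

lemma aux_cos_pos {t : ℝ} (ht : |t| < π/2) : 0 < Real.cos t := by
  have h := abs_lt.1 ht
  exact Real.cos_pos_of_mem_Ioo ⟨h.1, h.2⟩

/-! ### Complex lemmas about the integrand on horizontal lines -/

lemma aux_cosh_add_mul_I (x t : ℝ) :
    Complex.cosh (x + t * Complex.I) =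
      (Real.cosh x * Real.cos t : ℝ) + (Real.sinh x * Real.sin t : ℝ) * Complex.I := by
  rw [Complex.cosh_add, Complex.cosh_mul_I, Complex.sinh_mul_I,
    ← Complex.ofReal_cosh, ← Complex.ofReal_sinh, ← Complex.ofReal_cos, ← Complex.ofReal_sin]
  push_cast; ring

lemma aux_sinh_add_mul_I (x t : ℝ) :
    Complex.sinh (x + t * Complex.I) =
      (Real.sinh x * Real.cos t : ℝ) + (Real.cosh x * Real.sin t : ℝ) * Complex.I := by
  rw [Complex.sinh_add, Complex.cosh_mul_I, Complex.sinh_mul_I,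
    ← Complex.ofReal_cosh, ← Complex.ofReal_sinh, ← Complex.ofReal_cos, ← Complex.ofReal_sin]
  push_cast; ring

lemma aux_norm_sinh_le (x t : ℝ) :
    ‖Complex.sinh (x + t * Complex.I)‖ ≤ 2 * Real.cosh x := by
  rw [aux_sinh_add_mul_I]
  refine (norm_add_le _ _).trans ?_
  rw [norm_mul, Complex.norm_real, Complex.norm_real, Complex.norm_I, mul_one]
  have h1 : |Real.sinh x * Real.cos t| ≤ Real.cosh x := by
    rw [abs_mul]
    calc |Real.sinh x| * |Real.cos t| ≤ Real.cosh x * 1 := by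
          apply mul_le_mul _ (Real.abs_cos_le_one t) (abs_nonneg _) (Real.cosh_pos x).le
          · rw [abs_le]; constructor
            · nlinarith [Real.cosh_sq x, Real.cosh_pos x, Real.sinh_sq x]
            · nlinarith [Real.cosh_sq x, Real.cosh_pos x]
      _ = Real.cosh x := mul_one _
  have h2 : |Real.cosh x * Real.sin t| ≤ Real.cosh x := by
    rw [abs_mul, abs_of_nonneg (Real.cosh_pos x).le]
    nlinarith [Real.abs_sin_le_one t, Real.cosh_pos x, abs_nonneg (Real.sin t)]
  simp only [Real.norm_eq_abs]
  linarith

/-- The integrand translated to the horizontal line at height `t`. -/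
noncomputable def auxF (a lam : ℝ) (t x : ℝ) : ℂ :=
  Complex.exp (-(a:ℂ) * Complex.cosh (x + t * Complex.I)
    - Complex.I * lam * (x + t * Complex.I))

/-- The complex derivative of the integrand along the line. -/
noncomputable def auxDF (a lam : ℝ) (t x : ℝ) : ℂ :=
  (-(a:ℂ) * Complex.sinh (x + t * Complex.I) - Complex.I * lam) * auxF a lam t x

lemma aux_norm_f (a lam x t : ℝ) :
    ‖auxF a lam t x‖ = Real.exp (lam * t - a * (Real.cos t * Real.cosh x)) := by
  rw [auxF, Complex.norm_exp]
  congr 1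
  rw [aux_cosh_add_mul_I]
  simp [Complex.sub_re, Complex.mul_re, Complex.mul_im, Complex.add_re, Complex.add_im,
    Complex.I_re, Complex.I_im, Complex.ofReal_re, Complex.ofReal_im,
    Complex.cos_ofReal_re, Complex.sin_ofReal_re]
  ring

lemma aux_inner_hasDerivAt (a lam : ℝ) (z : ℂ) :
    HasDerivAt (fun z : ℂ => Complex.exp (-(a:ℂ) * Complex.cosh z - Complex.I * lam * z))
      ((-(a:ℂ) * Complex.sinh z - Complex.I * lam) *
        Complex.exp (-(a:ℂ) * Complex.cosh z - Complex.I * lam * z)) z := by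
  have h1 : HasDerivAt (fun z : ℂ => -(a:ℂ) * Complex.cosh z - Complex.I * lam * z)
      (-(a:ℂ) * Complex.sinh z - Complex.I * lam) z := by
    have hc := (Complex.hasDerivAt_cosh z).const_mul (-(a:ℂ))
    have hl : HasDerivAt (fun z : ℂ => Complex.I * (lam:ℂ) * z) (Complex.I * lam) z := by
      simpa using (hasDerivAt_id z).const_mul (Complex.I * (lam:ℂ))
    exact hc.sub hl
  simpa [mul_comm] using h1.cexp

lemma aux_hasDerivAt_x (a lam t : ℝ) (x : ℝ) :
    HasDerivAt (fun x : ℝ => auxF a lam t x) (auxDF a lam t x) x := by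
  have hh : HasDerivAt (fun x : ℝ => (x : ℂ) + t * Complex.I) 1 x := by
    simpa using (Complex.ofRealCLM.hasDerivAt (x := x)).add_const ((t:ℂ) * Complex.I)
  have := (aux_inner_hasDerivAt a lam ((x:ℂ) + t * Complex.I)).scomp x hh
  simpa [auxF, auxDF, Function.comp_def] using this

lemma aux_hasDerivAt_t (a lam x : ℝ) (t : ℝ) :
    HasDerivAt (fun t : ℝ => auxF a lam t x) (Complex.I * auxDF a lam t x) t := by
  have hh : HasDerivAt (fun t : ℝ => (x : ℂ) + t * Complex.I) Complex.I t := by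
    have : HasDerivAt (fun t : ℝ => (t:ℂ) * Complex.I) Complex.I t := by
      simpa using (Complex.ofRealCLM.hasDerivAt (x := t)).mul_const Complex.I
    simpa using this.const_add ((x:ℂ))
  have := (aux_inner_hasDerivAt a lam ((x:ℂ) + t * Complex.I)).scomp t hh
  simpa [auxF, auxDF, Function.comp_def, smul_eq_mul, mul_comm, mul_left_comm] using this

lemma aux_continuous (a lam t : ℝ) : Continuous (auxF a lam t) := by
  unfold auxF
  fun_prop

lemma aux_continuous_d (a lam t : ℝ) : Continuous (auxDF a lam t) := by
  unfold auxDF auxF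
  fun_prop

lemma aux_norm_DF_le (a lam : ℝ) (ha : 0 ≤ a) (t x : ℝ) :
    ‖auxDF a lam t x‖ ≤ (2*a * Real.cosh x + |lam|) *
      Real.exp (lam * t - a * (Real.cos t * Real.cosh x)) := by
  rw [auxDF, norm_mul, aux_norm_f]
  apply mul_le_mul_of_nonneg_right _ (Real.exp_pos _).le
  refine (norm_sub_le _ _).trans ?_
  rw [norm_mul, norm_mul, Complex.norm_I, one_mul, Complex.norm_real, Real.norm_eq_abs,
    norm_neg, Complex.norm_real, Real.norm_eq_abs, abs_of_nonneg ha]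
  have := aux_norm_sinh_le x t
  nlinarith [Real.cosh_pos x]

lemma aux_integrable_line (a lam : ℝ) (ha : 0 < a) {t : ℝ} (ht : |t| < π/2) :
    Integrable (fun x : ℝ => auxF a lam t x) := by
  have hc : 0 < a * Real.cos t := mul_pos ha (aux_cos_pos ht)
  refine ((aux_integrable_exp_neg_cosh hc).const_mul (Real.exp (lam * t))).mono'
    (aux_continuous a lam t).aestronglyMeasurable ?_
  filter_upwards with x
  rw [aux_norm_f, ← Real.exp_add]
  apply le_of_eq; congr 1; ring

lemma aux_integrable_line_d (a lam : ℝ) (ha : 0 < a) {t : ℝ} (ht : |t| < π/2) :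
    Integrable (fun x : ℝ => auxDF a lam t x) := by
  have hc : 0 < a * Real.cos t := mul_pos ha (aux_cos_pos ht)
  refine (((aux_integrable_poly_exp_neg_cosh hc (by positivity : (0:ℝ) ≤ 2*a)
      (abs_nonneg lam)).const_mul (Real.exp (lam * t))).mono'
    (aux_continuous_d a lam t).aestronglyMeasurable ?_)
  filter_upwards with x
  refine (aux_norm_DF_le a lam ha.le t x).trans (le_of_eq ?_)
  rw [show lam * t - a * (Real.cos t * Real.cosh x)
      = (lam * t) + (-(a * Real.cos t * Real.cosh x)) by ring, Real.exp_add]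
  ring

lemma aux_tendsto_line_top (a lam : ℝ) (ha : 0 < a) {t : ℝ} (ht : |t| < π/2) :
    Tendsto (fun x : ℝ => auxF a lam t x) atTop (𝓝 0) := by
  rw [tendsto_zero_iff_norm_tendsto_zero]
  simp_rw [aux_norm_f]
  have h1 : Tendsto (fun x : ℝ => lam * t - a * (Real.cos t * Real.cosh x)) atTop atBot := by
    apply tendsto_atBot_add_const_left
    have : Tendsto (fun x : ℝ => a * (Real.cos t * Real.cosh x)) atTop atTop :=
      (aux_tendsto_cosh_atTop.const_mul_atTop (aux_cos_pos ht)).const_mul_atTop ha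
    exact tendsto_neg_atBot_iff.mpr this
  exact Real.tendsto_exp_atBot.comp h1

lemma aux_tendsto_line_bot (a lam : ℝ) (ha : 0 < a) {t : ℝ} (ht : |t| < π/2) :
    Tendsto (fun x : ℝ => auxF a lam t x) atBot (𝓝 0) := by
  rw [tendsto_zero_iff_norm_tendsto_zero]
  simp_rw [aux_norm_f]
  have h1 : Tendsto (fun x : ℝ => lam * t - a * (Real.cos t * Real.cosh x)) atBot atBot := by
    apply tendsto_atBot_add_const_left
    have : Tendsto (fun x : ℝ => a * (Real.cos t * Real.cosh x)) atBot atTop :=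
      (aux_tendsto_cosh_atBot.const_mul_atTop (aux_cos_pos ht)).const_mul_atTop ha
    exact tendsto_neg_atBot_iff.mpr this
  exact Real.tendsto_exp_atBot.comp h1

lemma aux_integral_d_zero (a lam : ℝ) (ha : 0 < a) {t : ℝ} (ht : |t| < π/2) :
    ∫ x : ℝ, auxDF a lam t x = 0 := by
  have hIoi : ∫ x in Ioi (0:ℝ), auxDF a lam t x = 0 - auxF a lam t 0 :=
    integral_Ioi_of_hasDerivAt_of_tendsto'
      (fun x _ => aux_hasDerivAt_x a lam t x)
      (aux_integrable_line_d a lam ha ht).integrableOn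
      (aux_tendsto_line_top a lam ha ht)
  have hIic : ∫ x in Iic (0:ℝ), auxDF a lam t x = auxF a lam t 0 - 0 :=
    integral_Iic_of_hasDerivAt_of_tendsto'
      (fun x _ => aux_hasDerivAt_x a lam t x)
      (aux_integrable_line_d a lam ha ht).integrableOn
      (aux_tendsto_line_bot a lam ha ht)
  have hsplit : ∫ x : ℝ, auxDF a lam t x =
      (∫ x in Iic (0:ℝ), auxDF a lam t x) + ∫ x in Ioi (0:ℝ), auxDF a lam t x := by
    rw [← setIntegral_union (Iic_disjoint_Ioi le_rfl) measurableSet_Ioi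
      (aux_integrable_line_d a lam ha ht).integrableOn
      (aux_integrable_line_d a lam ha ht).integrableOn,
      Iic_union_Ioi, Measure.restrict_univ]
  rw [hsplit, hIoi, hIic]; ring

lemma aux_J_deriv (a lam : ℝ) (ha : 0 < a) {t₀ : ℝ} (ht₀ : |t₀| < π/2) :
    HasDerivAt (fun t => ∫ x : ℝ, auxF a lam t x) 0 t₀ := by
  set ε : ℝ := (π/2 - |t₀|)/2 with hε
  have hεpos : 0 < ε := by rw [hε]; linarith
  set b' : ℝ := |t₀| + ε with hb'
  have hb'lt : b' < π/2 := by
    rw [hb', hε]; linarith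
  have hb'nonneg : 0 ≤ b' := by positivity
  have hb'abs : |b'| < π/2 := by rwa [abs_of_nonneg hb'nonneg]
  have hcos : 0 < Real.cos b' := aux_cos_pos hb'abs
  have hball : ∀ t ∈ Metric.ball t₀ ε, |t| ≤ b' := by
    intro t htball
    rw [Metric.mem_ball, Real.dist_eq] at htball
    rw [hb']
    have := abs_sub_abs_le_abs_sub t t₀
    linarith
  have key := hasDerivAt_integral_of_dominated_loc_of_deriv_le (μ := volume)
    (F := fun t x => auxF a lam t x) (F' := fun t x => Complex.I * auxDF a lam t x)
    (x₀ := t₀)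
    (bound := fun x => Real.exp (|lam| * b') *
      ((2*a * Real.cosh x + |lam|) * Real.exp (-(a * Real.cos b' * Real.cosh x))))
    (Metric.ball_mem_nhds t₀ hεpos)
    (Eventually.of_forall fun t => (aux_continuous a lam t).aestronglyMeasurable)
    (aux_integrable_line a lam ha ht₀)
    (((aux_continuous_d a lam t₀).const_smul Complex.I).aestronglyMeasurable)
    ?_ ?_ ?_
  · have h0 : ∫ x : ℝ, Complex.I * auxDF a lam t₀ x = 0 := by
      rw [integral_const_mul, aux_integral_d_zero a lam ha ht₀, mul_zero]
    rw [h0] at key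
    exact key.2
  · filter_upwards with x
    intro t htball
    have h1 : ‖Complex.I * auxDF a lam t x‖ = ‖auxDF a lam t x‖ := by
      rw [norm_mul, Complex.norm_I, one_mul]
    rw [h1]
    refine (aux_norm_DF_le a lam ha.le t x).trans ?_
    have habs := hball t htball
    have hcosle : Real.cos b' ≤ Real.cos t := by
      rw [← Real.cos_abs t]
      exact Real.cos_le_cos_of_nonneg_of_le_pi (abs_nonneg t)
        (by linarith [Real.pi_pos, hb'lt]) habs
    have hexp : Real.exp (lam * t - a * (Real.cos t * Real.cosh x))
        ≤ Real.exp (|lam| * b' - a * (Real.cos b' * Real.cosh x)) := by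
      apply Real.exp_le_exp.2
      have h2 : lam * t ≤ |lam| * b' := by
        calc lam * t ≤ |lam * t| := le_abs_self _
          _ = |lam| * |t| := abs_mul _ _
          _ ≤ |lam| * b' := by
              apply mul_le_mul_of_nonneg_left habs (abs_nonneg lam)
      have h3 : a * (Real.cos b' * Real.cosh x) ≤ a * (Real.cos t * Real.cosh x) := by
        apply mul_le_mul_of_nonneg_left _ ha.le
        exact mul_le_mul_of_nonneg_right hcosle (Real.cosh_pos x).le
      linarith
    calc (2*a * Real.cosh x + |lam|) * Real.exp (lam * t - a * (Real.cos t * Real.cosh x))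
        ≤ (2*a * Real.cosh x + |lam|) *
            Real.exp (|lam| * b' - a * (Real.cos b' * Real.cosh x)) := by
          apply mul_le_mul_of_nonneg_left hexp
          positivity
      _ = Real.exp (|lam| * b') *
            ((2*a * Real.cosh x + |lam|) * Real.exp (-(a * Real.cos b' * Real.cosh x))) := by
          rw [show |lam| * b' - a * (Real.cos b' * Real.cosh x)
            = (|lam| * b') + (-(a * Real.cos b' * Real.cosh x)) by ring, Real.exp_add]
          ring
  · exact (aux_integrable_poly_exp_neg_cosh (mul_pos ha hcos)
      (by positivity : (0:ℝ) ≤ 2*a) (abs_nonneg lam)).const_mul _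
  · filter_upwards with x
    intro t _
    exact aux_hasDerivAt_t a lam x t

lemma aux_J_const (a lam : ℝ) (ha : 0 < a) {t : ℝ} (ht : |t| < π/2) :
    ∫ x : ℝ, auxF a lam t x = ∫ x : ℝ, auxF a lam 0 x := by
  have hderiv : ∀ u ∈ uIcc (0:ℝ) t, HasDerivAt (fun s => ∫ x : ℝ, auxF a lam s x) 0 u := by
    intro u hu
    apply aux_J_deriv a lam ha
    have h2 : |u| ≤ |t| := by
      rcases le_total 0 t with h | h
      · rw [uIcc_of_le h] at hu
        rw [abs_of_nonneg hu.1, abs_of_nonneg h]; exact hu.2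
      · rw [uIcc_of_ge h] at hu
        rw [abs_of_nonpos hu.2, abs_of_nonpos h]; linarith [hu.1]
    exact lt_of_le_of_lt h2 ht
  have h0 := intervalIntegral.integral_eq_sub_of_hasDerivAt hderiv
    (intervalIntegrable_const (c := (0:ℂ)))
  simp only [intervalIntegral.integral_const, smul_zero] at h0
  exact (sub_eq_zero.mp h0.symm)

/-- `K_a(z) = exp(-a cosh z)` on the reals (as a complex number). -/
noncomputable def Ka (a : ℝ) (x : ℝ) : ℂ := Complex.exp (-(a : ℂ) * Complex.cosh (x : ℂ))

/-- The Fourier transform `K̂_a(u) = ∫ K_a(x) e^{-iux} dx`. -/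
noncomputable def Khat (a : ℝ) (u : ℝ) : ℂ :=
  ∫ x : ℝ, Ka a x * Complex.exp (-Complex.I * (u * x))

/-- For `a > 0` and `0 < b < π/2`, for every real `λ`,
`|K̂_a(λ)| ≤ κ e^{-b|λ|}` with `κ = 2∫_0^∞ exp(-a cos b cosh u) du`. -/
theorem Khat_exp_decay (a b : ℝ) (ha : 0 < a) (hb0 : 0 < b) (hb : b < π / 2) (lam : ℝ) :
    ‖Khat a lam‖ ≤
      (2 * ∫ u in Set.Ioi (0 : ℝ), Real.exp (-a * Real.cos b * Real.cosh u)) *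
        Real.exp (-b * |lam|) := by
  set t' : ℝ := if 0 ≤ lam then -b else b with ht'
  have habs : |t'| = b := by
    rw [ht']; split_ifs <;> simp [abs_of_pos hb0]
  have ht'lt : |t'| < π/2 := by rw [habs]; exact hb
  have hlt : lam * t' = -(b * |lam|) := by
    rw [ht']; split_ifs with h
    · rw [abs_of_nonneg h]; ring
    · rw [abs_of_neg (lt_of_not_ge h)]; ring
  have hcos : Real.cos t' = Real.cos b := by
    rw [← Real.cos_abs t', habs]
  have hK : Khat a lam = ∫ x : ℝ, auxF a lam 0 x := by
    unfold Khat Ka auxF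
    congr 1; funext x
    rw [← Complex.exp_add]
    congr 1
    push_cast
    ring
  rw [hK, ← aux_J_const a lam ha ht'lt]
  have heven : ∫ x : ℝ, Real.exp (-(a * Real.cos b * Real.cosh x))
      = 2 * ∫ u in Ioi (0:ℝ), Real.exp (-a * Real.cos b * Real.cosh u) := by
    have h := integral_comp_abs
      (f := fun x : ℝ => Real.exp (-(a * Real.cos b * Real.cosh x)))
    simp only [Real.cosh_abs] at h
    rw [h]
    congr 1
    apply setIntegral_congr_fun measurableSet_Ioi
    intro u _
    ring_nf
  calc ‖∫ x : ℝ, auxF a lam t' x‖ ≤ ∫ x : ℝ, ‖auxF a lam t' x‖ :=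
        norm_integral_le_integral_norm _
    _ = ∫ x : ℝ, Real.exp (-(b * |lam|)) * Real.exp (-(a * Real.cos b * Real.cosh x)) := by
        congr 1; funext x
        rw [aux_norm_f, hcos, hlt, ← Real.exp_add]
        congr 1; ring
    _ = Real.exp (-(b * |lam|)) *
          ∫ x : ℝ, Real.exp (-(a * Real.cos b * Real.cosh x)) := integral_const_mul _ _
    _ = (2 * ∫ u in Set.Ioi (0 : ℝ), Real.exp (-a * Real.cos b * Real.cosh u)) *
          Real.exp (-b * |lam|) := by
        rw [heven, show -(b * |lam|) = -b * |lam| by ring]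
        ring
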